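/- Let I = ∫_0^∞ s^n (1+s^2)^{-n} ds. Then for every t ≥ 0 and integer n ≥ 4: ∫_0^∞ (s^2 + t^2 - 1)(s^2 + (t+1)^2)^{-(n-1)} s^{n-2} ds = I · [ 2(n-1)/(n-3) · (t+1)^{3-n} + 2 (t^2-1)(t+1)^{1-n} ]. -/

import Mathlib

open Set Real MeasureTheory Filter Topology

lemma aux_cont (k : ℕ) (m : ℝ) :
    Continuous (fun s : ℝ => s ^ k * (1 + s ^ 2) ^ (-m)) := by
  apply (continuous_pow k).mul
  apply (continuous_const.add (continuous_pow 2)).rpow_const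
  intro x; left; show (1 + x ^ 2 : ℝ) ≠ 0; positivity

lemma aux_bound (k : ℕ) (m : ℝ) {x : ℝ} (hx : 1 ≤ x) (hm : 0 ≤ m) :
    x ^ k * (1 + x ^ 2) ^ (-m) ≤ x ^ ((k : ℝ) - 2 * m) := by
  have hx0 : (0:ℝ) < x := lt_of_lt_of_le one_pos hx
  have h1 : (1 + x ^ 2 : ℝ) ^ (-m) ≤ (x ^ 2 : ℝ) ^ (-m) :=
    rpow_le_rpow_of_nonpos (by positivity) (by nlinarith) (by linarith)
  calc x ^ k * (1 + x ^ 2) ^ (-m) ≤ x ^ k * (x ^ 2) ^ (-m) :=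
        mul_le_mul_of_nonneg_left h1 (by positivity)
    _ = x ^ ((k : ℝ) - 2 * m) := by
        rw [← rpow_natCast x k, ← rpow_natCast x 2, ← rpow_mul hx0.le, ← rpow_add hx0]
        ring_nf

lemma aux_integrable (k : ℕ) (m : ℝ) (h : (k : ℝ) + 1 < 2 * m) :
    IntegrableOn (fun s : ℝ => s ^ k * (1 + s ^ 2) ^ (-m)) (Ioi 0) := by
  have hk0 : (0:ℝ) ≤ (k:ℝ) := Nat.cast_nonneg k
  have hm : 0 ≤ m := by linarith
  have h1 : IntegrableOn (fun s : ℝ => s ^ k * (1 + s ^ 2) ^ (-m)) (Ioc 0 1) :=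
    (aux_cont k m).integrableOn_Ioc
  have h2 : IntegrableOn (fun s : ℝ => s ^ k * (1 + s ^ 2) ^ (-m)) (Ioi 1) := by
    apply (integrableOn_Ioi_rpow_of_lt (a := (k:ℝ) - 2*m) (by linarith) one_pos).mono'
    · exact (aux_cont k m).aestronglyMeasurable.restrict
    · filter_upwards [ae_restrict_mem measurableSet_Ioi] with x hx
      have hx1 : (1:ℝ) ≤ x := le_of_lt hx
      rw [Real.norm_eq_abs, abs_of_nonneg (by positivity)]
      exact aux_bound k m hx1 hm
  have : Ioi (0:ℝ) = Ioc 0 1 ∪ Ioi 1 := (Set.Ioc_union_Ioi_eq_Ioi one_pos.le).symm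
  rw [this]
  exact h1.union h2

lemma aux_tendsto (k : ℕ) (m : ℝ) (h : (k : ℝ) + 1 < 2 * m) :
    Tendsto (fun s : ℝ => s ^ (k+1) * (1 + s ^ 2) ^ (-m)) atTop (𝓝 0) := by
  have hk0 : (0:ℝ) ≤ (k:ℝ) := Nat.cast_nonneg k
  have hm : 0 ≤ m := by linarith
  apply squeeze_zero' (g := fun s : ℝ => s ^ (((k:ℝ)+1) - 2*m))
  · filter_upwards [eventually_ge_atTop (0:ℝ)] with x hx; positivity
  · filter_upwards [eventually_ge_atTop (1:ℝ)] with x hx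
    have := aux_bound (k+1) m hx hm
    push_cast at this
    exact this
  · have : ((k:ℝ)+1) - 2*m = -(2*m - ((k:ℝ)+1)) := by ring
    rw [this]
    exact tendsto_rpow_neg_atTop (by linarith)

lemma aux_ibp (k : ℕ) (m : ℝ) (h : (k : ℝ) + 1 < 2 * m) :
    2 * m * (∫ s in Ioi (0:ℝ), s ^ (k+2) * (1 + s ^ 2) ^ (-(m+1)))
      = ((k:ℝ) + 1) * ∫ s in Ioi (0:ℝ), s ^ k * (1 + s ^ 2) ^ (-m) := by
  have hk0 : (0:ℝ) ≤ (k:ℝ) := Nat.cast_nonneg k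
  set f' : ℝ → ℝ := fun s => ((k:ℝ)+1) * (s ^ k * (1 + s ^ 2) ^ (-m))
    - 2*m * (s ^ (k+2) * (1 + s ^ 2) ^ (-(m+1))) with hf'
  have hint1 := aux_integrable k m h
  have hint2 : IntegrableOn (fun s : ℝ => s ^ (k+2) * (1 + s ^ 2) ^ (-(m+1))) (Ioi 0) := by
    apply aux_integrable (k+2) (m+1); push_cast; linarith
  have hderiv : ∀ x ∈ Ici (0:ℝ),
      HasDerivAt (fun s : ℝ => s ^ (k+1) * (1 + s ^ 2) ^ (-m)) (f' x) x := by
    intro x _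
    have h1 : HasDerivAt (fun s : ℝ => s ^ (k+1)) (((k:ℝ)+1) * x ^ k) x := by
      simpa using hasDerivAt_pow (k+1) x
    have h2 : HasDerivAt (fun s : ℝ => (1 + s ^ 2) ^ (-m))
        ((2*x) * (-m) * (1 + x ^ 2) ^ (-m - 1)) x := by
      have hb : HasDerivAt (fun s : ℝ => 1 + s ^ 2) (2*x) x := by
        simpa using (hasDerivAt_pow 2 x).const_add 1
      exact hb.rpow_const (Or.inl (by positivity))
    have := h1.mul h2
    refine this.congr_deriv ?_
    have hne : -(m+1) = -m - 1 := by ring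
    rw [hf', hne]
    ring
  have hfint : IntegrableOn f' (Ioi (0:ℝ)) :=
    (hint1.const_mul _).sub (hint2.const_mul _)
  have htend : Tendsto (fun s : ℝ => s ^ (k+1) * (1 + s ^ 2) ^ (-m)) atTop (𝓝 0) :=
    aux_tendsto k m h
  have key := integral_Ioi_of_hasDerivAt_of_tendsto' hderiv hfint htend
  have hF0 : (0:ℝ) ^ (k+1) * (1 + (0:ℝ) ^ 2) ^ (-m) = 0 := by simp
  rw [hF0, sub_zero, hf'] at key
  rw [integral_sub (hint1.const_mul _) (hint2.const_mul _),
    integral_const_mul, integral_const_mul] at key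
  linarith [key]

lemma aux_split (k : ℕ) (m : ℝ) (h : (k : ℝ) + 1 < 2 * m) :
    (∫ s in Ioi (0:ℝ), s ^ (k+2) * (1 + s ^ 2) ^ (-(m+1)))
      = (∫ s in Ioi (0:ℝ), s ^ k * (1 + s ^ 2) ^ (-m))
        - ∫ s in Ioi (0:ℝ), s ^ k * (1 + s ^ 2) ^ (-(m+1)) := by
  have h2 : (k:ℝ) + 1 < 2 * (m+1) := by linarith
  rw [← integral_sub (aux_integrable k m h) (aux_integrable k (m+1) h2)]
  apply setIntegral_congr_fun measurableSet_Ioi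
  intro x _
  have hpos : (0:ℝ) < 1 + x ^ 2 := by positivity
  have key : (1 + x ^ 2 : ℝ) ^ (-m) = (1 + x ^ 2) * (1 + x ^ 2) ^ (-(m+1)) := by
    rw [show -m = 1 + -(m+1) by ring, rpow_add hpos, rpow_one]
  dsimp only
  rw [key]
  ring

/-- With `I = ∫_0^∞ sⁿ (1+s²)^{-n} ds`, for every `t ≥ 0` and integer `n ≥ 4`:
`∫_0^∞ (s² + t² - 1)(s² + (t+1)²)^{-(n-1)} s^{n-2} ds
  = I [ 2(n-1)/(n-3) (t+1)^{3-n} + 2(t²-1)(t+1)^{1-n} ]`. -/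
theorem statement14 (n : ℕ) (hn : 4 ≤ n) (t : ℝ) (ht : 0 ≤ t) :
    (∫ s in Set.Ioi (0 : ℝ),
        (s ^ 2 + t ^ 2 - 1) * (s ^ 2 + (t + 1) ^ 2) ^ (-((n : ℝ) - 1)) * s ^ (n - 2)) =
      (∫ s in Set.Ioi (0 : ℝ), s ^ n * (1 + s ^ 2) ^ (-(n : ℝ))) *
        (2 * ((n : ℝ) - 1) / ((n : ℝ) - 3) * (t + 1) ^ (3 - (n : ℝ)) +
          2 * (t ^ 2 - 1) * (t + 1) ^ (1 - (n : ℝ))) := by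
  obtain ⟨m, rfl⟩ : ∃ m, n = m + 4 := ⟨n - 4, by omega⟩
  clear hn
  set c : ℝ := t + 1 with hcdef
  clear_value c
  have hc0 : (0:ℝ) < c := by rw [hcdef]; linarith
  have hm0 : (0:ℝ) ≤ (m:ℝ) := Nat.cast_nonneg m
  set I := ∫ s in Set.Ioi (0:ℝ), s ^ (m+4) * (1 + s ^ 2) ^ (-((m:ℝ)+4)) with hI
  set A := ∫ s in Set.Ioi (0:ℝ), s ^ (m+4) * (1 + s ^ 2) ^ (-((m:ℝ)+3)) with hA
  set B := ∫ s in Set.Ioi (0:ℝ), s ^ (m+2) * (1 + s ^ 2) ^ (-((m:ℝ)+3)) with hB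
  set C := ∫ s in Set.Ioi (0:ℝ), s ^ (m+2) * (1 + s ^ 2) ^ (-((m:ℝ)+2)) with hC
  clear_value I A B C
  have h1 := aux_ibp (m+2) ((m:ℝ)+3) (by push_cast; linarith)
  have h2 := aux_ibp (m+2) ((m:ℝ)+2) (by push_cast; linarith)
  have h3 := aux_split (m+2) ((m:ℝ)+2) (by push_cast; linarith)
  simp only [show m+2+2 = m+4 by omega, show ((m:ℝ)+3)+1 = (m:ℝ)+4 by ring,
    show ((m:ℝ)+2)+1 = (m:ℝ)+3 by ring] at h1 h2 h3
  push_cast at h1 h2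
  simp only [← hI, ← hA, ← hB, ← hC] at h1 h2 h3
  -- B = 2 I
  have hBI : B = 2 * I := by
    have hx : ((m:ℝ)+3) * B = ((m:ℝ)+3) * (2 * I) := by linarith
    exact mul_left_cancel₀ (by positivity) hx
  have hC' : C = A + 2 * I := by rw [h3, hBI]; ring
  have hAI : ((m:ℝ)+1) * A = 2 * ((m:ℝ)+3) * I := by linear_combination h2 + ((m:ℝ)+3) * hC'
  -- rewrite goal exponents
  have e0 : m + 4 - 2 = m + 2 := by omega
  have e1 : -(((m+4 : ℕ):ℝ) - 1) = -((m:ℝ)+3) := by push_cast; ring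
  have e2 : (3 : ℝ) - ((m+4 : ℕ):ℝ) = -((m:ℝ)+1) := by push_cast; ring
  have e3 : (1 : ℝ) - ((m+4 : ℕ):ℝ) = -((m:ℝ)+3) := by push_cast; ring
  have e4 : -(((m+4 : ℕ):ℝ)) = -((m:ℝ)+4) := by push_cast; ring
  have e5 : 2 * (((m+4 : ℕ):ℝ) - 1) / (((m+4 : ℕ):ℝ) - 3) = 2 * ((m:ℝ)+3) / ((m:ℝ)+1) := by
    push_cast; ring_nf
  rw [e0, e1, e2, e3, e4, e5, ← hI]
  -- change of variables s = c * x
  have hcv := integral_comp_mul_left_Ioi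
    (fun s : ℝ => (s ^ 2 + t ^ 2 - 1) * (s ^ 2 + c ^ 2) ^ (-((m:ℝ)+3)) * s ^ (m+2)) 0 hc0
  rw [mul_zero, smul_eq_mul] at hcv
  have hLHS : (∫ s in Set.Ioi (0:ℝ),
      (s ^ 2 + t ^ 2 - 1) * (s ^ 2 + c ^ 2) ^ (-((m:ℝ)+3)) * s ^ (m+2))
      = c * ∫ x in Set.Ioi (0:ℝ),
        ((c*x) ^ 2 + t ^ 2 - 1) * ((c*x) ^ 2 + c ^ 2) ^ (-((m:ℝ)+3)) * (c*x) ^ (m+2) := by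
    rw [hcv]; field_simp
  rw [hLHS]
  -- pointwise rewrite of the substituted integrand
  have hpw : (∫ x in Set.Ioi (0:ℝ),
      ((c*x) ^ 2 + t ^ 2 - 1) * ((c*x) ^ 2 + c ^ 2) ^ (-((m:ℝ)+3)) * (c*x) ^ (m+2))
      = ∫ x in Set.Ioi (0:ℝ), c ^ (-((m:ℝ)+4)) *
          (c ^ 2 * (x ^ (m+4) * (1 + x ^ 2) ^ (-((m:ℝ)+3)))
            + (t ^ 2 - 1) * (x ^ (m+2) * (1 + x ^ 2) ^ (-((m:ℝ)+3)))) := by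
    apply setIntegral_congr_fun measurableSet_Ioi
    intro x _
    dsimp only
    have q1 : ((c*x) ^ 2 + c ^ 2 : ℝ) = c ^ 2 * (1 + x ^ 2) := by ring
    have q2 : (c ^ 2 * (1 + x ^ 2) : ℝ) ^ (-((m:ℝ)+3))
        = (c ^ 2) ^ (-((m:ℝ)+3)) * (1 + x ^ 2) ^ (-((m:ℝ)+3)) :=
      mul_rpow (by positivity) (by positivity)
    have q3 : (c ^ 2 : ℝ) ^ (-((m:ℝ)+3)) * c ^ (m+2) = c ^ (-((m:ℝ)+4)) := by
      rw [← rpow_natCast c (m+2), ← rpow_natCast c 2, ← rpow_mul hc0.le, ← rpow_add hc0]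
      congr 1
      push_cast; ring
    calc ((c*x) ^ 2 + t ^ 2 - 1) * ((c*x) ^ 2 + c ^ 2) ^ (-((m:ℝ)+3)) * (c*x) ^ (m+2)
        = (c ^ 2 * x ^ 2 + t ^ 2 - 1) * ((c ^ 2) ^ (-((m:ℝ)+3)) * c ^ (m+2))
            * (1 + x ^ 2) ^ (-((m:ℝ)+3)) * x ^ (m+2) := by
          rw [q1, q2, mul_pow]; ring
      _ = c ^ (-((m:ℝ)+4)) *
          (c ^ 2 * (x ^ (m+4) * (1 + x ^ 2) ^ (-((m:ℝ)+3)))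
            + (t ^ 2 - 1) * (x ^ (m+2) * (1 + x ^ 2) ^ (-((m:ℝ)+3)))) := by
          rw [q3]; ring
  rw [hpw]
  have hintA : IntegrableOn (fun x : ℝ => x ^ (m+4) * (1 + x ^ 2) ^ (-((m:ℝ)+3)))
      (Set.Ioi 0) := aux_integrable (m+4) ((m:ℝ)+3) (by push_cast; linarith)
  have hintB : IntegrableOn (fun x : ℝ => x ^ (m+2) * (1 + x ^ 2) ^ (-((m:ℝ)+3)))
      (Set.Ioi 0) := aux_integrable (m+2) ((m:ℝ)+3) (by push_cast; linarith)
  rw [integral_const_mul, integral_add (hintA.const_mul _) (hintB.const_mul _),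
    integral_const_mul, integral_const_mul, ← hA, ← hB, hBI]
  -- final algebra
  have r1 : c ^ (-((m:ℝ)+3)) = c * c ^ (-((m:ℝ)+4)) := by
    rw [show -((m:ℝ)+3) = 1 + -((m:ℝ)+4) by ring, rpow_add hc0, rpow_one]
  have r2 : c ^ (-((m:ℝ)+1)) = c ^ 2 * (c * c ^ (-((m:ℝ)+4))) := by
    rw [← r1, show -((m:ℝ)+1) = ((2:ℕ):ℝ) + -((m:ℝ)+3) by push_cast; ring,
      rpow_add hc0, rpow_natCast]
  set D : ℝ := c ^ (-((m:ℝ)+4)) with hD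
  clear_value D
  rw [r1, r2]
  have hm1 : (m:ℝ) + 1 ≠ 0 := by positivity
  field_simp
  linear_combination (c ^ 2 * D) * hAI
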